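/- End-to-end plaintext correctness of BatchSquare: let L, s be natural numbers, δ an integer, and for 1 ≤ i ≤ s let xᵢ be an integer and rᵢ a natural number such that 0 ≤ xᵢ + δ and xᵢ + δ + rᵢ < L. Define C = Σ_{i=1}^{s} L^(i−1)·(xᵢ + rᵢ + δ). Then for every i, setting aᵢ = ⌊(C mod L^i) / L^(i−1)⌋ − δ, one has aᵢ = xᵢ + rᵢ and aᵢ² − 2rᵢ·(xᵢ + δ) − rᵢ² + 2δ·rᵢ = xᵢ². -/
import Mathlib


/-- End-to-end plaintext correctness of the BatchSquare protocol. -/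
theorem batchSquare_correct (L s : ℕ) (δ : ℤ) (x : ℕ → ℤ) (r : ℕ → ℕ)
    (hx0 : ∀ i ∈ Finset.Icc 1 s, 0 ≤ x i + δ)
    (hxL : ∀ i ∈ Finset.Icc 1 s, x i + δ + (r i : ℤ) < (L : ℤ))
    (C : ℤ)
    (hC : C = ∑ i ∈ Finset.Icc 1 s, (L : ℤ) ^ (i - 1) * (x i + (r i : ℤ) + δ)) :
    ∀ i ∈ Finset.Icc 1 s,
      (C % (L : ℤ) ^ i) / (L : ℤ) ^ (i - 1) - δ = x i + (r i : ℤ) ∧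
      (x i + (r i : ℤ)) ^ 2 - 2 * (r i : ℤ) * (x i + δ) - (r i : ℤ) ^ 2
          + 2 * δ * (r i : ℤ) = x i ^ 2 := by
  intro i hi
  have hi' := hi
  rw [Finset.mem_Icc] at hi'
  obtain ⟨hi1, his⟩ := hi'
  set d : ℕ → ℤ := fun j => x j + (r j : ℤ) + δ with hd
  have hd0 : ∀ j ∈ Finset.Icc 1 s, 0 ≤ d j := by
    intro j hj
    have h1 := hx0 j hj
    have h2 : (0:ℤ) ≤ (r j : ℤ) := Int.natCast_nonneg _
    simp only [hd]; linarith
  have hdL : ∀ j ∈ Finset.Icc 1 s, d j ≤ (L:ℤ) - 1 := by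
    intro j hj
    have h1 := hxL j hj
    simp only [hd]; linarith
  have hL : 0 < (L:ℤ) := by
    have := hd0 i hi
    have := hdL i hi
    linarith
  -- split the sum
  have hsplit : Finset.Icc 1 s = Finset.Ioc 0 s := rfl
  have hC1 : C = (∑ j ∈ Finset.Ioc 0 (i-1), (L:ℤ)^(j-1) * d j)
      + (L:ℤ)^(i-1) * d i
      + (∑ j ∈ Finset.Ioc i s, (L:ℤ)^(j-1) * d j) := by
    rw [hC, hsplit,
      ← Finset.sum_Ioc_consecutive (fun j => (L:ℤ)^(j-1) * d j) (Nat.zero_le i) his]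
    have : Finset.Ioc 0 i = insert i (Finset.Ioc 0 (i-1)) := by
      ext j
      simp only [Finset.mem_Ioc, Finset.mem_insert]
      omega
    rw [this, Finset.sum_insert (by simp only [Finset.mem_Ioc]; omega)]
    ring
  set A : ℤ := ∑ j ∈ Finset.Ioc 0 (i-1), (L:ℤ)^(j-1) * d j with hA
  have hA0 : 0 ≤ A := by
    apply Finset.sum_nonneg
    intro j hj
    rw [Finset.mem_Ioc] at hj
    have : j ∈ Finset.Icc 1 s := by rw [Finset.mem_Icc]; omega
    exact mul_nonneg (pow_nonneg hL.le _) (hd0 j this)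
  have hAlt : A ≤ (L:ℤ)^(i-1) - 1 := by
    have hle : A ≤ ∑ j ∈ Finset.Ioc 0 (i-1), (L:ℤ)^(j-1) * ((L:ℤ) - 1) := by
      apply Finset.sum_le_sum
      intro j hj
      rw [Finset.mem_Ioc] at hj
      have : j ∈ Finset.Icc 1 s := by rw [Finset.mem_Icc]; omega
      exact mul_le_mul_of_nonneg_left (hdL j this) (pow_nonneg hL.le _)
    have heq : ∑ j ∈ Finset.Ioc 0 (i-1), (L:ℤ)^(j-1) * ((L:ℤ) - 1)
        = (L:ℤ)^(i-1) - 1 := by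
      have h1 : Finset.Ioc 0 (i-1) = Finset.Ico 1 (i-1+1) := by
        ext j; simp [Finset.mem_Ioc, Finset.mem_Ico]; omega
      rw [h1, Finset.sum_Ico_eq_sum_range]
      simp only [Nat.add_sub_cancel]
      have : ∀ t, (L:ℤ)^(1 + t - 1) = (L:ℤ)^t := by intro t; congr 1; omega
      rw [Finset.sum_congr rfl (fun t _ => by rw [this t])]
      rw [← Finset.sum_mul]
      exact geom_sum_mul (L:ℤ) (i-1)
    linarith
  -- the tail is a multiple of L^i
  have htail : ∑ j ∈ Finset.Ioc i s, (L:ℤ)^(j-1) * d j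
      = (L:ℤ)^i * ∑ j ∈ Finset.Ioc i s, (L:ℤ)^(j-1-i) * d j := by
    rw [Finset.mul_sum]
    apply Finset.sum_congr rfl
    intro j hj
    rw [Finset.mem_Ioc] at hj
    rw [← mul_assoc, ← pow_add]
    congr 2
    omega
  have hdi0 : 0 ≤ d i := hd0 i hi
  have hdiL : d i ≤ (L:ℤ) - 1 := hdL i hi
  have hpow : (L:ℤ)^(i-1) * (L:ℤ) = (L:ℤ)^i := by
    rw [← pow_succ]
    congr 1
    omega
  have hlow0 : 0 ≤ A + (L:ℤ)^(i-1) * d i :=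
    add_nonneg hA0 (mul_nonneg (pow_nonneg hL.le _) hdi0)
  have hlowlt : A + (L:ℤ)^(i-1) * d i < (L:ℤ)^i := by
    have h1 : (L:ℤ)^(i-1) * d i ≤ (L:ℤ)^(i-1) * ((L:ℤ) - 1) :=
      mul_le_mul_of_nonneg_left hdiL (pow_nonneg hL.le _)
    nlinarith [pow_nonneg hL.le (i-1)]
  have hmod : C % (L:ℤ)^i = A + (L:ℤ)^(i-1) * d i := by
    have hCe : C = (A + (L:ℤ)^(i-1) * d i)
        + (L:ℤ)^i * ∑ j ∈ Finset.Ioc i s, (L:ℤ)^(j-1-i) * d j := by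
      rw [hC1, htail]
    rw [hCe, Int.add_mul_emod_self_left]
    exact Int.emod_eq_of_lt hlow0 hlowlt
  have hpowne : (L:ℤ)^(i-1) ≠ 0 := pow_ne_zero _ hL.ne'
  have hdiv : (A + (L:ℤ)^(i-1) * d i) / (L:ℤ)^(i-1) = d i := by
    rw [Int.add_mul_ediv_left A (d i) hpowne,
      Int.ediv_eq_zero_of_lt hA0 (by have := pow_pos hL (i-1); linarith)]
    ring
  constructor
  · rw [hmod, hdiv]
    simp only [hd]
    ring
  · ring
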